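/- Let n ≥ 1, let 𝒦 ⊆ ℝⁿ be a convex set that contains some closed Euclidean ball of radius r > 0, and let f : 𝒦 → ℝ be convex on 𝒦 with 0 ≤ f(x) ≤ 1 for all x ∈ 𝒦. Let 0 < ε ≤ 1 and let 𝒳 ⊆ 𝒦 be a δ-net of 𝒦 (i.e., for every y ∈ 𝒦 there exists x ∈ 𝒳 with ‖x − y‖ ≤ δ) with δ ≤ (1/4)·r·ε². Then inf_{x ∈ 𝒳} f(x) ≤ inf_{x ∈ 𝒦} f(x) + ε. -/
import Mathlib


/-- Discretization lemma: restricting a `[0,1]`-valued convex function to a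
sufficiently fine `δ`-net of a convex body containing a ball of radius `r`
loses at most `ε` in the minimum. -/
theorem net_discretization
    (n : ℕ) (hn : 1 ≤ n) (𝒦 : Set (EuclideanSpace ℝ (Fin n)))
    (hconv : Convex ℝ 𝒦) (r : ℝ) (hr : 0 < r)
    (hball : ∃ c, Metric.closedBall c r ⊆ 𝒦)
    (f : EuclideanSpace ℝ (Fin n) → ℝ) (hf : ConvexOn ℝ 𝒦 f)
    (hf01 : ∀ x ∈ 𝒦, f x ∈ Set.Icc (0:ℝ) 1)
    (ε δ : ℝ) (hε0 : 0 < ε) (hε1 : ε ≤ 1) (hδ : δ ≤ (1/4) * r * ε ^ 2)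
    (𝒳 : Set (EuclideanSpace ℝ (Fin n))) (h𝒳 : 𝒳 ⊆ 𝒦)
    (hnet : ∀ y ∈ 𝒦, ∃ x ∈ 𝒳, ‖x - y‖ ≤ δ) :
    sInf (f '' 𝒳) ≤ sInf (f '' 𝒦) + ε := by
  obtain ⟨c, hc⟩ := hball
  have hc𝒦 : c ∈ 𝒦 := hc (Metric.mem_closedBall_self hr.le)
  set θ : ℝ := ε / 2 with hθdef
  have hθ0 : 0 < θ := by positivity
  have hθ1 : θ ≤ 1 / 2 := by simp only [hθdef]; linarith
  -- key: every point of 𝒦 has a net point with value at most ε/2 more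
  have key : ∀ y ∈ 𝒦, ∃ x ∈ 𝒳, f x ≤ f y + ε := by
    intro y hy
    have hy' : (1 - θ) • y + θ • c ∈ 𝒦 :=
      hconv hy hc𝒦 (by linarith) hθ0.le (by ring)
    obtain ⟨x, hx𝒳, hxd⟩ := hnet _ hy'
    set w : EuclideanSpace ℝ (Fin n) := c + θ⁻¹ • (x - ((1 - θ) • y + θ • c)) with hw
    have hw𝒦 : w ∈ 𝒦 := by
      apply hc
      rw [Metric.mem_closedBall, dist_eq_norm]
      have : w - c = θ⁻¹ • (x - ((1 - θ) • y + θ • c)) := by rw [hw]; abel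
      rw [this, norm_smul, Real.norm_eq_abs, abs_of_pos (inv_pos.mpr hθ0)]
      have h1 : θ⁻¹ * ‖x - ((1 - θ) • y + θ • c)‖ ≤ θ⁻¹ * δ :=
        mul_le_mul_of_nonneg_left hxd (inv_pos.mpr hθ0).le
      have h2 : θ⁻¹ * δ ≤ θ⁻¹ * (1/4 * r * ε ^ 2) :=
        mul_le_mul_of_nonneg_left hδ (inv_pos.mpr hθ0).le
      have h3 : θ⁻¹ * (1/4 * r * ε ^ 2) = r * ε / 2 := by
        field_simp [hθdef]; ring
      nlinarith [mul_le_of_le_one_right hr.le hε1]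
    have hxcomb : x = (1 - θ) • y + θ • w := by
      rw [hw, smul_add, smul_smul, mul_inv_cancel₀ hθ0.ne', one_smul]
      abel
    have hcv := hf.2 hy hw𝒦 (show (0:ℝ) ≤ 1 - θ by linarith) hθ0.le (by ring)
    rw [← hxcomb] at hcv
    simp only [smul_eq_mul] at hcv
    refine ⟨x, hx𝒳, hcv.trans ?_⟩
    have hfy := hf01 y hy
    have hfw := hf01 w hw𝒦
    have : (1 - θ) * f y + θ * f w ≤ f y + θ := by nlinarith [hfy.1, hfy.2, hfw.1, hfw.2]
    linarith [this, show θ ≤ ε by linarith]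
  -- 𝒦 nonempty, f '' 𝒳 bounded below and nonempty
  have h𝒦ne : 𝒦.Nonempty := ⟨c, hc𝒦⟩
  obtain ⟨x₀, hx₀𝒳, _⟩ := key c hc𝒦
  have hbdd : BddBelow (f '' 𝒳) := ⟨0, by rintro _ ⟨x, hx, rfl⟩; exact (hf01 x (h𝒳 hx)).1⟩
  have hle : sInf (f '' 𝒳) - ε ≤ sInf (f '' 𝒦) := by
    apply le_csInf (h𝒦ne.image f)
    rintro _ ⟨y, hy, rfl⟩
    obtain ⟨x, hx𝒳, hfx⟩ := key y hy
    have := csInf_le hbdd ⟨x, hx𝒳, rfl⟩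
    linarith
  linarith
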